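/- arXiv:2505.16316 — 3 statements merged into one kernel-verified Lean document; each statement's English description precedes it below -/
import Mathlib

section
/- Let K be a field of characteristic zero with derivation ∂, and let R be the differential polynomial ring K[x_0, x_1, x_2, …] with derivation δ extending ∂ and δ(x_i) = x_{i+1}. Suppose Θ ∈ R has the form Θ = a_n x_n + a_{n-1} x_{n-1} + ⋯ + a_0 x_0 + f with a_i ∈ K, a_n ≠ 0, and f ∈ (x_0)·R ∩ K[x_0,…,x_n] having zero linear part in x_n. Then for every s ≥ 0, δ^s(Θ) = a_n x_{n+s} + (terms in K[x_0,…,x_{n+s-1}] plus elements of the ideal (x_0)), i.e., the leading linear term of δ^s(Θ) is a_n x_{n+s}. -/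
open MvPolynomial

noncomputable def projAux (K : Type*) [CommSemiring K] (m : ℕ) :
    MvPolynomial ℕ K →ₐ[K] MvPolynomial ℕ K :=
  aeval (fun i => if i ≤ m then X i else 0)

lemma projAux_mem {K : Type*} [CommSemiring K] (m : ℕ) (q : MvPolynomial ℕ K) :
    projAux K m q ∈ supported K {i : ℕ | i ≤ m} := by
  induction q using MvPolynomial.induction_on with
  | C r => rw [projAux, aeval_C]; exact (supported K _).algebraMap_mem r
  | add p q hp hq => rw [map_add]; exact add_mem hp hq
  | mul_X p i hp =>
    rw [map_mul]
    refine mul_mem hp ?_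
    rw [projAux, aeval_X]
    by_cases h : i ≤ m
    · rw [if_pos h, supported_eq_adjoin_X]
      exact Algebra.subset_adjoin ⟨i, h, rfl⟩
    · rw [if_neg h]; exact zero_mem _

lemma projAux_id {K : Type*} [CommSemiring K] (m : ℕ) {q : MvPolynomial ℕ K}
    (h : q ∈ supported K {i : ℕ | i ≤ m}) : projAux K m q = q := by
  rw [supported_eq_adjoin_X] at h
  induction h using Algebra.adjoin_induction with
  | mem x hx =>
    obtain ⟨i, hi, rfl⟩ := hx
    rw [projAux, aeval_X]; exact if_pos hi
  | algebraMap r => simp [projAux]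
  | add x y _ _ hx hy => rw [map_add, hx, hy]
  | mul x y _ _ hx hy => rw [map_mul, hx, hy]

lemma div_supported {K : Type*} [CommSemiring K] (m : ℕ) {g : MvPolynomial ℕ K}
    (h1 : g ∈ Ideal.span {(X 0 : MvPolynomial ℕ K)})
    (h2 : g ∈ supported K {i : ℕ | i ≤ m}) :
    ∃ p ∈ supported K {i : ℕ | i ≤ m}, g = X 0 * p := by
  rw [Ideal.mem_span_singleton] at h1
  obtain ⟨q, rfl⟩ := h1
  refine ⟨projAux K m q, projAux_mem m q, ?_⟩
  have h3 := projAux_id m h2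
  rw [map_mul] at h3
  have h0 : projAux K m (X 0) = X 0 := by
    rw [projAux, aeval_X, if_pos (Nat.zero_le m)]
  rw [h0] at h3
  exact h3.symm

lemma X0_dvd_of_supported {K : Type*} [CommSemiring K] {q : MvPolynomial ℕ K}
    (hs : q ∈ supported K {i : ℕ | i ≤ 0}) (h0 : coeff 0 q = 0) :
    (X 0 : MvPolynomial ℕ K) ∣ q := by
  classical
  rw [show q = ∑ v ∈ q.support, monomial v (coeff v q) from as_sum q]
  refine Finset.dvd_sum ?_
  intro v hv
  have hvne : v ≠ 0 := by
    rintro rfl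
    exact (mem_support_iff.mp hv) h0
  have hvars := mem_supported.mp hs
  have hv0 : v 0 ≠ 0 := by
    by_contra hc
    apply hvne
    ext j
    by_cases hj : j ∈ v.support
    · have : j ∈ q.vars := (mem_vars j).mpr ⟨v, hv, hj⟩
      have hj0 : j ≤ 0 := hvars this
      interval_cases j
      · exact absurd hc (Finsupp.mem_support_iff.mp hj)
    · simpa using Finsupp.notMem_support_iff.mp hj
  have hle : Finsupp.single 0 1 ≤ v :=
    Finsupp.single_le_iff.mpr (Nat.one_le_iff_ne_zero.mpr hv0)
  refine ⟨monomial (v - Finsupp.single 0 1) (coeff v q), ?_⟩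
  rw [X, monomial_mul, one_mul, add_tsub_cancel_of_le hle]

lemma delta_supported {K : Type*} [CommSemiring K] (d : K → K)
    (δ : MvPolynomial ℕ K → MvPolynomial ℕ K)
    (hδadd : ∀ p q, δ (p + q) = δ p + δ q)
    (hδmul : ∀ p q, δ (p * q) = p * δ q + δ p * q)
    (hδC : ∀ r : K, δ (C r) = C (d r))
    (hδX : ∀ i : ℕ, δ (X i) = X (i + 1))
    (m : ℕ) {q : MvPolynomial ℕ K} (h : q ∈ supported K {i : ℕ | i ≤ m}) :
    δ q ∈ supported K {i : ℕ | i ≤ m + 1} := by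
  rw [supported_eq_adjoin_X] at h
  induction h using Algebra.adjoin_induction with
  | mem x hx =>
    obtain ⟨i, hi, rfl⟩ := hx
    rw [hδX, supported_eq_adjoin_X]
    exact Algebra.subset_adjoin ⟨i + 1, by simpa using Nat.succ_le_succ hi, rfl⟩
  | algebraMap r =>
    rw [show (algebraMap K (MvPolynomial ℕ K)) r = C r from rfl, hδC]
    exact (supported K _).algebraMap_mem (d r)
  | add x y _ _ hx hy => rw [hδadd]; exact add_mem hx hy
  | mul x y hxm hym hx hy =>
    rw [hδmul]
    have mono : supported K {i : ℕ | i ≤ m} ≤ supported K {i : ℕ | i ≤ m + 1} :=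
      supported_mono (fun i (hi : i ≤ m) => Nat.le_succ_of_le hi)
    rw [← supported_eq_adjoin_X] at hxm hym
    exact add_mem (mul_mem (mono hxm) hy) (mul_mem hx (mono hym))

/-- The leading linear term of δ^s(Θ) is a_n x_{n+s}: if Θ = Σ a_i x_i + f with
a_n ≠ 0 and f ∈ (x_0) ∩ K[x_0,…,x_n] with zero linear part in x_n, then
δ^s(Θ) = a_n x_{n+s} + g_1 + g_2 with g_1 ∈ K[x_0,…,x_{n+s-1}] and g_2 ∈ (x_0). -/
theorem stmt4 {K : Type*} [Field K] [CharZero K] (d : K → K)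
    (hadd : ∀ a b : K, d (a + b) = d a + d b)
    (hleib : ∀ a b : K, d (a * b) = a * d b + d a * b)
    (δ : MvPolynomial ℕ K → MvPolynomial ℕ K)
    (hδadd : ∀ p q, δ (p + q) = δ p + δ q)
    (hδmul : ∀ p q, δ (p * q) = p * δ q + δ p * q)
    (hδC : ∀ r : K, δ (C r) = C (d r))
    (hδX : ∀ i : ℕ, δ (X i) = X (i + 1))
    (n : ℕ) (a : ℕ → K) (han : a n ≠ 0) (f : MvPolynomial ℕ K)
    (hf1 : f ∈ Ideal.span {(X 0 : MvPolynomial ℕ K)})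
    (hf2 : f ∈ MvPolynomial.supported K {i : ℕ | i ≤ n})
    (hflin : MvPolynomial.coeff (Finsupp.single n 1) f = 0)
    (Θ : MvPolynomial ℕ K)
    (hΘ : Θ = (∑ i ∈ Finset.range (n + 1), C (a i) * X i) + f) :
    ∀ s : ℕ, ∃ g1 g2 : MvPolynomial ℕ K,
      g1 ∈ MvPolynomial.supported K {i : ℕ | i ≤ n + s - 1} ∧
      g2 ∈ Ideal.span {(X 0 : MvPolynomial ℕ K)} ∧
      δ^[s] Θ = C (a n) * X (n + s) + g1 + g2 := by
  have hδ0 : δ 0 = 0 := by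
    have h := hδadd 0 0
    rw [add_zero] at h
    exact (left_eq_add.mp h)
  have hCmem : ∀ (r : K) (Ss : Set ℕ), (C r : MvPolynomial ℕ K) ∈ supported K Ss :=
    fun r Ss => by rw [← algebraMap_eq]; exact (supported K _).algebraMap_mem r
  have key : ∀ s : ℕ, ∃ g1 p : MvPolynomial ℕ K,
      g1 ∈ supported K {i : ℕ | i ≤ n + s - 1} ∧
      p ∈ supported K {i : ℕ | i ≤ n + s} ∧
      (n + s = 0 → g1 = 0 ∧ ∃ r ∈ supported K {i : ℕ | i ≤ 0}, p = X 0 * r) ∧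
      δ^[s] Θ = C (a n) * X (n + s) + g1 + X 0 * p := by
    intro s
    induction s with
    | zero =>
      obtain ⟨p0, hp0mem, hp0eq⟩ := div_supported n hf1 hf2
      refine ⟨∑ i ∈ Finset.range n, C (a i) * X i, p0, ?_, ?_, ?_, ?_⟩
      · refine sum_mem fun i hi => ?_
        have hi' : i ≤ n + 0 - 1 := by
          have := Finset.mem_range.mp hi; omega
        exact mul_mem (hCmem _ _) (X_mem_supported.mpr hi')
      · simpa using hp0mem
      · intro h0
        have hn : n = 0 := by omega
        subst hn
        refine ⟨by simp, ?_⟩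
        have hc : coeff 0 p0 = 0 := by
          have hc1 := coeff_X_mul (0 : ℕ →₀ ℕ) 0 p0
          rw [add_zero] at hc1
          rw [← hc1, ← hp0eq]
          exact hflin
        exact div_supported 0
          (Ideal.mem_span_singleton.mpr (X0_dvd_of_supported hp0mem hc)) hp0mem
      · rw [Function.iterate_zero_apply, hΘ, Finset.sum_range_succ, hp0eq,
          Nat.add_zero]
        ring
    | succ s ih =>
      obtain ⟨g1, p, hg1, hp, hcond, heq⟩ := ih
      have hX1 : δ (X 0 : MvPolynomial ℕ K) = X 1 := hδX 0
      have hstep : δ^[s + 1] Θ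
          = C (a n) * X (n + s + 1) + (C (d (a n)) * X (n + s) + δ g1)
            + (X 0 * δ p + X 1 * p) := by
        rw [Function.iterate_succ_apply', heq, hδadd, hδadd, hδmul, hδmul, hδC,
          hδX, hX1]
        ring
      have hb : {i : ℕ | i ≤ n + (s + 1) - 1} = {i : ℕ | i ≤ n + s} := by
        ext i; simp only [Set.mem_setOf_eq]; omega
      by_cases h0 : n + s = 0
      · obtain ⟨hg10, r, hr, hpeq⟩ := hcond h0
        refine ⟨C (d (a n)) * X (n + s) + δ g1, δ p + X 1 * r, ?_, ?_,
          fun h => absurd h (by omega), ?_⟩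
        · rw [hb]
          refine add_mem (mul_mem (hCmem _ _) (X_mem_supported.mpr (by simp))) ?_
          rw [hg10, hδ0]; exact zero_mem _
        · refine add_mem (delta_supported d δ hδadd hδmul hδC hδX _ hp) (mul_mem ?_ ?_)
          · exact X_mem_supported.mpr (by simp only [Set.mem_setOf_eq]; omega)
          · exact supported_mono (fun i (hi : i ≤ 0) => by
              simp only [Set.mem_setOf_eq]; omega) hr
        · rw [show n + (s + 1) = n + s + 1 from rfl, hstep, hpeq]
          ring
      · refine ⟨C (d (a n)) * X (n + s) + δ g1 + X 1 * p, δ p, ?_,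
          delta_supported d δ hδadd hδmul hδC hδX _ hp,
          fun h => absurd h (by omega), ?_⟩
        · rw [hb]
          refine add_mem (add_mem (mul_mem (hCmem _ _) (X_mem_supported.mpr (by simp))) ?_) ?_
          · refine supported_mono (fun i (hi : i ≤ n + s - 1 + 1) => by
              simp only [Set.mem_setOf_eq]; omega)
              (delta_supported d δ hδadd hδmul hδC hδX _ hg1)
          · exact mul_mem (X_mem_supported.mpr (by simp only [Set.mem_setOf_eq]; omega)) hp
        · rw [show n + (s + 1) = n + s + 1 from rfl, hstep]
          ring
  intro s
  obtain ⟨g1, p, hg1, hp, _, heq⟩ := key s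
  exact ⟨g1, X 0 * p, hg1, Ideal.mem_span_singleton.mpr (dvd_mul_right _ _), heq⟩
end

section
/- Let K be a field of characteristic zero with derivation ∂ and let V be a K-vector space with semilinear operator ∂ and filtration (V_n) such that ∂(V_n) ⊆ V_{n+1} and each nonzero v ∈ V_n \ V_{n−1} has ∂^s v ∈ V_{n+s} \ V_{n+s−1} for all s. Suppose B_i ⊆ V_i is a finite set whose image in V_i/(V_{i−1} + ∂V_{i−1} ∩ V_i) is linearly independent (where V_{−1} = 0). Then for all n ≥ i, the set S_n(B_i) = { ∂^h Θ : Θ ∈ B_i, 0 ≤ h ≤ n − i } is K-linearly independent in V_n. -/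
/-- Proposition 3.4: a primitive subset B_i of V_i (images linearly independent in
V_i/(V_{i-1} + ∂V_{i-1})) stays linearly independent after applying ∂ repeatedly:
S_n(B_i) = {∂^h Θ : Θ ∈ B_i, 0 ≤ h ≤ n-i} is K-linearly independent in V_n. -/
theorem stmt9 {K V : Type*} [Field K] [CharZero K] [AddCommGroup V] [Module K V]
    (dK : K → K)
    (F : ℕ → Submodule K V) (hMono : Monotone F)
    (D : V → V) (hDadd : ∀ x y : V, D (x + y) = D x + D y)
    (hsemi : ∀ (c : K) (v : V), D (c • v) = c • D v + dK c • v)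
    (hDF : ∀ n, ∀ v ∈ F n, D v ∈ F (n + 1))
    (hStrict : ∀ (n : ℕ) (v : V), v ∈ F n → v ≠ 0 → (1 ≤ n → v ∉ F (n - 1)) →
      ∀ i : ℕ, 1 ≤ i → D^[i] v ∈ F (n + i) ∧ D^[i] v ∉ F (n + i - 1))
    (i n : ℕ) (hin : i ≤ n)
    (B : Finset V) (hB : ∀ b ∈ B, b ∈ F i)
    (W : Submodule K V)
    (hW : W = if i = 0 then ⊥ else
      F (i - 1) ⊔ Submodule.span K (D '' (F (i - 1) : Set V)))
    (hBprim : LinearIndependent K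
      (fun b : B => (Submodule.Quotient.mk (b : V) : V ⧸ W))) :
    LinearIndependent K
      (fun p : B × Fin (n - i + 1) => D^[(p.2 : ℕ)] (p.1 : V)) := by
  -- basic consequences of additivity
  have hD0 : D 0 = 0 := by
    have h := hDadd 0 0
    simp only [add_zero] at h
    exact left_eq_add.mp h
  have hDit_add : ∀ (h : ℕ) (x y : V), D^[h] (x + y) = D^[h] x + D^[h] y := by
    intro h
    induction h with
    | zero => intro x y; simp
    | succ k ih =>
        intro x y
        simp only [Function.iterate_succ_apply']
        rw [ih, hDadd]
  have hDit0 : ∀ h : ℕ, D^[h] (0 : V) = 0 := by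
    intro h
    induction h with
    | zero => simp
    | succ k ih => simp [Function.iterate_succ_apply', ih, hD0]
  have hDit_sum : ∀ (h : ℕ) (s : Finset ↥B) (f : ↥B → V),
      D^[h] (∑ b ∈ s, f b) = ∑ b ∈ s, D^[h] (f b) := by
    intro h s f
    induction s using Finset.cons_induction with
    | empty => simp [hDit0]
    | cons a s ha ih => simp [Finset.sum_cons, hDit_add, ih]
  -- iterated D raises filtration degree
  have hDpow : ∀ (j m : ℕ) (v : V), v ∈ F m → D^[j] v ∈ F (m + j) := by
    intro j
    induction j with
    | zero => intro m v hv; simpa using hv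
    | succ k ih =>
        intro m v hv
        rw [Function.iterate_succ_apply']
        have := hDF (m + k) _ (ih m v hv)
        simpa [add_assoc] using this
  -- semilinear Leibniz up to lower order
  have hLeib : ∀ (k m : ℕ) (c : K) (v : V), v ∈ F m →
      ∃ r ∈ F (m + k), D^[k+1] (c • v) = c • D^[k+1] v + r := by
    intro k
    induction k with
    | zero =>
        intro m c v hv
        exact ⟨dK c • v, Submodule.smul_mem _ _ (by simpa using hv), by
          simpa using hsemi c v⟩
    | succ k ih =>
        intro m c v hv
        obtain ⟨r, hr, hEq⟩ := ih m c v hv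
        refine ⟨dK c • D^[k+1] v + D r, ?_, ?_⟩
        · refine Submodule.add_mem _ ?_ ?_
          · exact Submodule.smul_mem _ _ (by
              have := hDpow (k+1) m v hv
              simpa [add_assoc] using this)
          · have := hDF (m + k) r hr
            simpa [add_assoc] using this
        · rw [Function.iterate_succ_apply' D (k+1), hEq, hDadd,
            hsemi, Function.iterate_succ_apply' D (k+1)]
          abel
  rw [Fintype.linearIndependent_iff]
  intro g hg
  set T : Fin (n - i + 1) → V := fun j => ∑ b : ↥B, g (b, j) • D^[(j : ℕ)] (b : V) with hT
  have hg' : ∑ j : Fin (n - i + 1), T j = 0 := by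
    rw [← hg, Fintype.sum_prod_type]
    simp only [hT]
    exact Finset.sum_comm
  -- main claim, by downward induction
  have key : ∀ d : ℕ, ∀ h : ℕ, (n - i + 1) ≤ h + d → ∀ (hh : h < (n - i + 1)) (b : ↥B),
      g (b, ⟨h, hh⟩) = 0 := by
    intro d
    induction d with
    | zero => intro h hle hh b; omega
    | succ d ihd =>
        intro h hle hh b
        have hzero : ∀ (h' : ℕ) (hh' : h' < (n - i + 1)), h < h' → ∀ b' : ↥B,
            g (b', ⟨h', hh'⟩) = 0 := by
          intro h' hh' hlt b'
          exact ihd h' (by omega) hh' b'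
        -- the element w
        set w : V := ∑ b' : ↥B, g (b', ⟨h, hh⟩) • (b' : V) with hw
        have hwW : w ∈ W := by
          rcases Nat.eq_zero_or_pos h with h0 | hpos
          · -- h = 0 : w is the whole sum, hence 0
            subst h0
            have hwT : w = T ⟨0, hh⟩ := by simp [hw, hT]
            have : w = 0 := by
              rw [hwT, ← hg']
              refine (Fintype.sum_eq_single _ ?_).symm
              intro j hj
              have hjpos : 0 < (j : ℕ) := by
                rcases Nat.eq_zero_or_pos (j : ℕ) with h0' | h0'
                · exact absurd (Fin.ext h0') hj
                · exact h0'
              have : ∀ b' : ↥B, g (b', j) = 0 := by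
                intro b'
                have := hzero (j : ℕ) j.isLt hjpos b'
                simpa using this
              simp [hT, this]
            rw [this]; exact W.zero_mem
          · by_contra hnot
            obtain ⟨k, rfl⟩ : ∃ k, h = k + 1 :=
              ⟨h - 1, (Nat.succ_pred_eq_of_pos hpos).symm⟩
            have hwF : w ∈ F i :=
              Submodule.sum_mem _ fun b' _ =>
                Submodule.smul_mem _ _ (hB _ b'.2)
            have hw0 : w ≠ 0 := fun e => hnot (e ▸ W.zero_mem)
            have hwF' : 1 ≤ i → w ∉ F (i - 1) := by
              intro hi hmem
              apply hnot
              rw [hW, if_neg (by omega)]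
              exact Submodule.mem_sup_left hmem
            obtain ⟨-, hnotmem⟩ := hStrict i w hwF hw0 hwF' (k + 1) (by omega)
            apply hnotmem
            -- show D^[k+1] w ∈ F (i + (k+1) - 1) = F (i + k)
            have hik : i + (k + 1) - 1 = i + k := by omega
            rw [hik]
            -- T at level k+1 is in F (i+k)
            have hTh : T ⟨k + 1, hh⟩ ∈ F (i + k) := by
              have hsplit : T ⟨k + 1, hh⟩ =
                  -∑ j ∈ Finset.univ.erase ⟨k + 1, hh⟩, T j := by
                have := Finset.add_sum_erase Finset.univ T
                  (Finset.mem_univ (⟨k + 1, hh⟩ : Fin (n - i + 1)))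
                rw [hg'] at this
                linear_combination (norm := abel) this
              rw [hsplit]
              refine neg_mem (Submodule.sum_mem _ ?_)
              intro j hj
              have hjne : j ≠ ⟨k + 1, hh⟩ := (Finset.mem_erase.mp hj).1
              rcases lt_or_ge (j : ℕ) (k + 1) with hlt | hge
              · refine Submodule.sum_mem _ fun b' _ => Submodule.smul_mem _ _ ?_
                exact hMono (by omega) (hDpow (j : ℕ) i _ (hB _ b'.2))
              · have hne' : (j : ℕ) ≠ k + 1 := fun e => hjne (Fin.ext e)
                have hgt : k + 1 < (j : ℕ) := by omega
                have : ∀ b' : ↥B, g (b', j) = 0 := by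
                  intro b'
                  have := hzero (j : ℕ) j.isLt hgt b'
                  simpa using this
                simp [hT, this]
            -- the Leibniz correction
            have hdiff : D^[k+1] w - T ⟨k + 1, hh⟩ ∈ F (i + k) := by
              have h1 : D^[k+1] w = ∑ b' : ↥B, D^[k+1] (g (b', ⟨k+1, hh⟩) • (b' : V)) :=
                hDit_sum _ _ _
              have h2 : D^[k+1] w - T ⟨k + 1, hh⟩ =
                  ∑ b' : ↥B, (D^[k+1] (g (b', ⟨k+1, hh⟩) • (b' : V)) -
                    g (b', ⟨k+1, hh⟩) • D^[k+1] (b' : V)) := by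
                rw [h1, hT]
                rw [← Finset.sum_sub_distrib]
              rw [h2]
              refine Submodule.sum_mem _ fun b' _ => ?_
              obtain ⟨r, hr, hEq⟩ := hLeib k i (g (b', ⟨k+1, hh⟩)) (b' : V) (hB _ b'.2)
              rw [hEq]
              simpa using hr
            have := Submodule.add_mem _ hdiff hTh
            simpa using this
        -- conclude from primitivity
        have hq : ∑ b' : ↥B, g (b', ⟨h, hh⟩) •
            (Submodule.Quotient.mk (b' : V) : V ⧸ W) = 0 := by
          have : ∑ b' : ↥B, g (b', ⟨h, hh⟩) •
              (Submodule.Quotient.mk (b' : V) : V ⧸ W) = W.mkQ w := by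
            rw [hw, map_sum]
            simp [Submodule.mkQ_apply]
          rw [this, Submodule.mkQ_apply, Submodule.Quotient.mk_eq_zero]
          exact hwW
        exact Fintype.linearIndependent_iff.mp hBprim _ hq b
  intro p
  obtain ⟨b, j⟩ := p
  have := key (n - i + 1) (j : ℕ) (by omega) j.isLt b
  simpa using this
end

section
/- In the setting of the previous statement, if B_{i_1}, …, B_{i_k} are primitive subsets for V_{i_1}, …, V_{i_k} respectively with i_1 < i_2 < ⋯ < i_k ≤ n, then the union S_n(B_{i_1}) ∪ ⋯ ∪ S_n(B_{i_k}) is K-linearly independent in V_n. -/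
lemma aux_iter_mem {K V : Type*} [Field K] [AddCommGroup V] [Module K V]
    (F : ℕ → Submodule K V) (D : V → V)
    (hDF : ∀ n, ∀ v ∈ F n, D v ∈ F (n + 1)) :
    ∀ (i a : ℕ) (v : V), v ∈ F a → D^[i] v ∈ F (a + i) := by
  intro i
  induction i with
  | zero =>
    intro a v hv
    simpa only [Nat.add_zero, Function.iterate_zero_apply] using hv
  | succ i ih =>
    intro a v hv
    have h2 : a + (i + 1) = (a + i) + 1 := by omega
    rw [Function.iterate_succ_apply', h2]
    exact hDF (a + i) _ (ih a v hv)

lemma aux_inner {K V : Type*} [Field K] [AddCommGroup V] [Module K V]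
    (dK : K → K)
    (F : ℕ → Submodule K V) (hMono : Monotone F)
    (D : V → V) (hDadd : ∀ x y : V, D (x + y) = D x + D y)
    (hsemi : ∀ (c : K) (v : V), D (c • v) = c • D v + dK c • v)
    (hDF : ∀ n, ∀ v ∈ F n, D v ∈ F (n + 1))
    (hStrict : ∀ (m : ℕ) (v : V), v ∈ F m → v ≠ 0 → (1 ≤ m → v ∉ F (m - 1)) →
      ∀ i : ℕ, 1 ≤ i → D^[i] v ∈ F (m + i) ∧ D^[i] v ∉ F (m + i - 1))
    (k : ℕ) (idx : Fin k → ℕ) (hidx : StrictMono idx)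
    (B : Fin k → Finset V) (hB : ∀ j, ∀ b ∈ B j, b ∈ F (idx j))
    (W : Fin k → Submodule K V)
    (hW : ∀ j, W j = if idx j = 0 then ⊥ else
      F (idx j - 1) ⊔ Submodule.span K (D '' (F (idx j - 1) : Set V)))
    (hBprim : ∀ j, LinearIndependent K
      (fun b : B j => (Submodule.Quotient.mk (b : V) : V ⧸ W j))) :
    ∀ (m : ℕ) (c : (j : Fin k) → (B j) → K),
      ((∑ j : Fin k, if idx j ≤ m then ∑ b : (B j), c j b • D^[m - idx j] (b : V) else 0)
        ∈ (if m = 0 then (⊥ : Submodule K V) else F (m - 1))) →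
      ∀ (j : Fin k) (b : (B j)), idx j ≤ m → c j b = 0 := by
  intro m
  induction m using Nat.strong_induction_on with
  | _ m ih =>
  intro c hsum
  -- Step 1: coefficients at top order vanish
  have step1 : ∀ (j0 : Fin k), idx j0 = m → ∀ b : (B j0), c j0 b = 0 := by
    intro j0 hj0
    have hterm : ∀ jj ∈ Finset.univ.erase j0,
        (if idx jj ≤ m then ∑ b : (B jj), c jj b • D^[m - idx jj] (b : V) else 0) ∈ W j0 := by
      intro jj hjj
      by_cases hle : idx jj ≤ m
      · have hne : jj ≠ j0 := (Finset.mem_erase.mp hjj).1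
        have hlt : idx jj < m :=
          lt_of_le_of_ne hle (fun h => hne (hidx.injective (h.trans hj0.symm)))
        have hm1 : idx j0 ≠ 0 := by omega
        rw [if_pos hle, hW j0, if_neg hm1, hj0]
        apply Submodule.sum_mem
        intro b _
        apply Submodule.mem_sup_right
        apply Submodule.smul_mem
        apply Submodule.subset_span
        obtain ⟨t, ht⟩ : ∃ t, m - idx jj = t + 1 := ⟨m - idx jj - 1, by omega⟩
        refine ⟨D^[t] (b : V), ?_, ?_⟩
        · exact hMono (by omega : idx jj + t ≤ m - 1)
            (aux_iter_mem F D hDF _ _ _ (hB jj b b.2))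
        · rw [ht, Function.iterate_succ_apply']
      · rw [if_neg hle]; exact (W j0).zero_mem
    have hsmem : (∑ j : Fin k, if idx j ≤ m then ∑ b : (B j), c j b • D^[m - idx j] (b : V) else 0)
        ∈ W j0 := by
      by_cases hm0 : m = 0
      · rw [if_pos hm0, Submodule.mem_bot] at hsum
        rw [hsum]; exact (W j0).zero_mem
      · rw [if_neg hm0] at hsum
        rw [hW j0, if_neg (by omega : idx j0 ≠ 0), hj0]
        exact Submodule.mem_sup_left hsum
    have hE : (if idx j0 ≤ m then ∑ b : (B j0), c j0 b • D^[m - idx j0] (b : V) else 0) +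
        ∑ jj ∈ Finset.univ.erase j0,
          (if idx jj ≤ m then ∑ b : (B jj), c jj b • D^[m - idx jj] (b : V) else 0) =
        ∑ j : Fin k, if idx j ≤ m then ∑ b : (B j), c j b • D^[m - idx j] (b : V) else 0 :=
      Finset.add_sum_erase Finset.univ
        (fun j => if idx j ≤ m then ∑ b : (B j), c j b • D^[m - idx j] (b : V) else 0)
        (Finset.mem_univ j0)
    have hv0' : (if idx j0 ≤ m then ∑ b : (B j0), c j0 b • D^[m - idx j0] (b : V) else 0) =
        ∑ b : (B j0), c j0 b • (b : V) := by
      rw [if_pos (le_of_eq hj0), hj0]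
      simp
    have hv0mem : (∑ b : (B j0), c j0 b • (b : V)) ∈ W j0 := by
      rw [← hv0', eq_sub_of_add_eq hE]
      exact Submodule.sub_mem _ hsmem (Submodule.sum_mem _ hterm)
    have hq : (W j0).mkQ (∑ b : (B j0), c j0 b • (b : V)) = 0 := by
      rwa [Submodule.mkQ_apply, Submodule.Quotient.mk_eq_zero]
    simp only [map_sum, map_smul, Submodule.mkQ_apply] at hq
    exact Fintype.linearIndependent_iff.mp (hBprim j0) (c j0) hq
  by_cases hm0 : m = 0
  · intro j b hjm
    exact step1 j (by omega) b
  -- Step 2: peel one derivative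
  · have hs'F : (∑ j : Fin k, if idx j ≤ m - 1 then
        ∑ b : (B j), c j b • D^[m - 1 - idx j] (b : V) else 0) ∈ F (m - 1) := by
      apply Submodule.sum_mem
      intro j _
      by_cases hle : idx j ≤ m - 1
      · rw [if_pos hle]
        apply Submodule.sum_mem
        intro b _
        apply Submodule.smul_mem
        exact hMono (by omega : idx j + (m - 1 - idx j) ≤ m - 1)
          (aux_iter_mem F D hDF _ _ _ (hB j b b.2))
      · rw [if_neg hle]; exact Submodule.zero_mem _
    have hD0 : D 0 = 0 := by
      have := hDadd 0 0
      simpa using this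
    have hDs' : D (∑ j : Fin k, if idx j ≤ m - 1 then
        ∑ b : (B j), c j b • D^[m - 1 - idx j] (b : V) else 0) ∈ F (m - 1) := by
      have hDmap : ∀ (s : Finset (Fin k)) (f : Fin k → V), D (∑ j ∈ s, f j) = ∑ j ∈ s, D (f j) := by
        intro s f
        exact map_sum (AddMonoidHom.mk' D hDadd) f s
      rw [hDmap]
      have hcongr : ∀ j : Fin k,
          D (if idx j ≤ m - 1 then ∑ b : (B j), c j b • D^[m - 1 - idx j] (b : V) else 0) =
          (if idx j ≤ m - 1 then ∑ b : (B j), c j b • D^[m - idx j] (b : V) else 0) +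
          (if idx j ≤ m - 1 then ∑ b : (B j), dK (c j b) • D^[m - 1 - idx j] (b : V) else 0) := by
        intro j
        by_cases hle : idx j ≤ m - 1
        · rw [if_pos hle, if_pos hle, if_pos hle]
          have hDmap2 : ∀ (f : (B j) → V), D (∑ b : (B j), f b) = ∑ b : (B j), D (f b) := by
            intro f
            exact map_sum (AddMonoidHom.mk' D hDadd) f Finset.univ
          rw [hDmap2, ← Finset.sum_add_distrib]
          apply Finset.sum_congr rfl
          intro b _
          rw [hsemi]
          congr 2
          rw [show m - idx j = (m - 1 - idx j) + 1 from by omega,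
            Function.iterate_succ_apply']
        · rw [if_neg hle, if_neg hle, if_neg hle, hD0, zero_add]
      rw [Finset.sum_congr rfl (fun j _ => hcongr j), Finset.sum_add_distrib]
      apply Submodule.add_mem
      · have heq : (∑ j : Fin k, if idx j ≤ m - 1 then
            ∑ b : (B j), c j b • D^[m - idx j] (b : V) else 0) =
            (∑ j : Fin k, if idx j ≤ m then
            ∑ b : (B j), c j b • D^[m - idx j] (b : V) else 0) := by
          apply Finset.sum_congr rfl
          intro j _
          by_cases hle : idx j ≤ m - 1
          · rw [if_pos hle, if_pos (by omega)]
          · by_cases hle2 : idx j ≤ m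
            · have hjm : idx j = m := by omega
              rw [if_neg hle, if_pos hle2]
              symm
              apply Finset.sum_eq_zero
              intro b _
              rw [step1 j hjm b, zero_smul]
            · rw [if_neg hle, if_neg hle2]
        rw [heq]
        rwa [if_neg hm0] at hsum
      · apply Submodule.sum_mem
        intro j _
        by_cases hle : idx j ≤ m - 1
        · rw [if_pos hle]
          apply Submodule.sum_mem
          intro b _
          apply Submodule.smul_mem
          exact hMono (by omega : idx j + (m - 1 - idx j) ≤ m - 1)
            (aux_iter_mem F D hDF _ _ _ (hB j b b.2))
        · rw [if_neg hle]; exact Submodule.zero_mem _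
    have hs'E : (∑ j : Fin k, if idx j ≤ m - 1 then
        ∑ b : (B j), c j b • D^[m - 1 - idx j] (b : V) else 0)
        ∈ (if m - 1 = 0 then (⊥ : Submodule K V) else F (m - 1 - 1)) := by
      by_contra hcon
      have h1 : (∑ j : Fin k, if idx j ≤ m - 1 then
          ∑ b : (B j), c j b • D^[m - 1 - idx j] (b : V) else 0) ≠ 0 := by
        intro h0
        apply hcon
        rw [h0]
        split <;> exact Submodule.zero_mem _
      have h2 : 1 ≤ m - 1 → (∑ j : Fin k, if idx j ≤ m - 1 then
          ∑ b : (B j), c j b • D^[m - 1 - idx j] (b : V) else 0) ∉ F (m - 1 - 1) := by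
        intro hge hmem
        apply hcon
        rw [if_neg (by omega)]
        exact hmem
      have := (hStrict (m - 1) _ hs'F h1 h2 1 le_rfl).2
      rw [Function.iterate_one] at this
      exact this (by simpa using hDs')
    have hih := ih (m - 1) (by omega) c hs'E
    intro j b hjm
    by_cases hje : idx j = m
    · exact step1 j hje b
    · exact hih j b (by omega)

/-- Proposition 3.5: if B_{i_1}, …, B_{i_k} are primitive subsets for
V_{i_1}, …, V_{i_k} with i_1 < ⋯ < i_k ≤ n, then
S_n(B_{i_1}) ∪ ⋯ ∪ S_n(B_{i_k}) is K-linearly independent in V_n. -/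
theorem stmt10 {K V : Type*} [Field K] [CharZero K] [AddCommGroup V] [Module K V]
    (dK : K → K)
    (F : ℕ → Submodule K V) (hMono : Monotone F)
    (D : V → V) (hDadd : ∀ x y : V, D (x + y) = D x + D y)
    (hsemi : ∀ (c : K) (v : V), D (c • v) = c • D v + dK c • v)
    (hDF : ∀ n, ∀ v ∈ F n, D v ∈ F (n + 1))
    (hStrict : ∀ (m : ℕ) (v : V), v ∈ F m → v ≠ 0 → (1 ≤ m → v ∉ F (m - 1)) →
      ∀ i : ℕ, 1 ≤ i → D^[i] v ∈ F (m + i) ∧ D^[i] v ∉ F (m + i - 1))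
    (k n : ℕ) (idx : Fin k → ℕ) (hidx : StrictMono idx)
    (hidxn : ∀ j, idx j ≤ n)
    (B : Fin k → Finset V) (hB : ∀ j, ∀ b ∈ B j, b ∈ F (idx j))
    (W : Fin k → Submodule K V)
    (hW : ∀ j, W j = if idx j = 0 then ⊥ else
      F (idx j - 1) ⊔ Submodule.span K (D '' (F (idx j - 1) : Set V)))
    (hBprim : ∀ j, LinearIndependent K
      (fun b : B j => (Submodule.Quotient.mk (b : V) : V ⧸ W j))) :
    LinearIndependent K
      (fun p : (j : Fin k) × ((B j) × Fin (n - idx j + 1)) =>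
        D^[(p.2.2 : ℕ)] (p.2.1 : V)) := by
  rw [Fintype.linearIndependent_iff]
  intro g hg
  set ord : ((j : Fin k) × ((B j) × Fin (n - idx j + 1))) → ℕ :=
    fun p => idx p.1 + (p.2.2 : ℕ) with hord
  have hordle : ∀ p, ord p ≤ n := by
    intro p
    have h1 := hidxn p.1
    have h2 : (p.2.2 : ℕ) ≤ n - idx p.1 := Nat.lt_succ_iff.mp p.2.2.isLt
    simp only [hord]
    omega
  have key : ∀ m : ℕ, (∀ p, m < ord p → g p = 0) → ∀ p, ord p = m → g p = 0 := by
    intro m hhigh p hpm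
    have hm_le_n : m ≤ n := hpm ▸ hordle p
    set c : (j : Fin k) → (B j) → K := fun j b =>
      if h : idx j ≤ m ∧ m - idx j < n - idx j + 1 then g ⟨j, b, ⟨m - idx j, h.2⟩⟩ else 0
      with hc
    have hsplit : (∑ q, g q • D^[(q.2.2 : ℕ)] (q.2.1 : V)) =
        (∑ q, if ord q = m then g q • D^[(q.2.2 : ℕ)] (q.2.1 : V) else 0) +
        (∑ q, if ord q < m then g q • D^[(q.2.2 : ℕ)] (q.2.1 : V) else 0) := by
      rw [← Finset.sum_add_distrib]
      apply Finset.sum_congr rfl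
      intro q _
      by_cases h1 : ord q = m
      · rw [if_pos h1, if_neg (by omega), add_zero]
      · by_cases h2 : ord q < m
        · rw [if_neg h1, if_pos h2, zero_add]
        · rw [if_neg h1, if_neg h2, hhigh q (by omega), zero_smul, add_zero]
    have hBmem : (∑ q, if ord q < m then g q • D^[(q.2.2 : ℕ)] (q.2.1 : V) else 0) ∈
        (if m = 0 then (⊥ : Submodule K V) else F (m - 1)) := by
      by_cases hm0 : m = 0
      · rw [if_pos hm0]
        have : (∑ q, if ord q < m then g q • D^[(q.2.2 : ℕ)] (q.2.1 : V) else 0) = 0 := by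
          apply Finset.sum_eq_zero
          intro q _
          rw [if_neg (by omega)]
        rw [this]; exact Submodule.zero_mem _
      · rw [if_neg hm0]
        apply Submodule.sum_mem
        intro q _
        by_cases h2 : ord q < m
        · rw [if_pos h2]
          apply Submodule.smul_mem
          apply hMono (by omega : ord q ≤ m - 1)
          exact aux_iter_mem F D hDF _ _ _ (hB q.1 q.2.1 q.2.1.2)
        · rw [if_neg h2]; exact Submodule.zero_mem _
    have hA : (∑ q, if ord q = m then g q • D^[(q.2.2 : ℕ)] (q.2.1 : V) else 0) =
        ∑ j : Fin k, if idx j ≤ m then ∑ b : (B j), c j b • D^[m - idx j] (b : V) else 0 := by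
      rw [← Finset.univ_sigma_univ, Finset.sum_sigma]
      apply Finset.sum_congr rfl
      intro j _
      rw [Fintype.sum_prod_type]
      by_cases hle : idx j ≤ m
      · rw [if_pos hle]
        apply Finset.sum_congr rfl
        intro b _
        have hmem : m - idx j < n - idx j + 1 := by omega
        rw [Finset.sum_eq_single (⟨m - idx j, hmem⟩ : Fin (n - idx j + 1))]
        · rw [if_pos (by simp only [hord]; omega)]
          simp only [hc]
          rw [dif_pos ⟨hle, hmem⟩]
        · intro h _ hne
          rw [if_neg]
          simp only [hord]
          intro hcontra
          apply hne
          apply Fin.ext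
          simp only []
          omega
        · intro habs
          exact absurd (Finset.mem_univ _) habs
      · rw [if_neg hle]
        apply Finset.sum_eq_zero
        intro b _
        apply Finset.sum_eq_zero
        intro h _
        rw [if_neg]
        simp only [hord]
        omega
    have hsum0 : (∑ j : Fin k, if idx j ≤ m then ∑ b : (B j), c j b • D^[m - idx j] (b : V) else 0)
        ∈ (if m = 0 then (⊥ : Submodule K V) else F (m - 1)) := by
      rw [← hA]
      have : (∑ q, if ord q = m then g q • D^[(q.2.2 : ℕ)] (q.2.1 : V) else 0) =
          -(∑ q, if ord q < m then g q • D^[(q.2.2 : ℕ)] (q.2.1 : V) else 0) := by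
        have h := hsplit
        rw [hg] at h
        exact eq_neg_of_add_eq_zero_left h.symm
      rw [this]
      exact Submodule.neg_mem _ hBmem
    have hres := aux_inner dK F hMono D hDadd hsemi hDF hStrict k idx hidx B hB W hW hBprim
      m c hsum0
    obtain ⟨j, b, h⟩ := p
    have hjm : idx j + (h : ℕ) = m := hpm
    have hle : idx j ≤ m := by omega
    have hcz := hres j b hle
    simp only [hc] at hcz
    rw [dif_pos ⟨hle, by omega⟩] at hcz
    have hfin : (⟨m - idx j, by omega⟩ : Fin (n - idx j + 1)) = h := by
      apply Fin.ext
      simp only []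
      omega
    rwa [hfin] at hcz
  have main : ∀ t, ∀ p, n ≤ ord p + t → g p = 0 := by
    intro t
    induction t with
    | zero =>
      intro p hp
      exact key n (fun q hq => absurd hq (by have := hordle q; omega)) p
        (by have := hordle p; omega)
    | succ t iht =>
      intro p hp
      by_cases h : n ≤ ord p + t
      · exact iht p h
      · exact key (ord p) (fun q hq => iht q (by omega)) p rfl
  intro p
  exact main n p (by omega)
end
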